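/- Let A > 0 and B > 0 be real numbers, and for each nonzero integer k define S_k := Σ_{n ∈ ℤ} (A n² + B k²)^{−3/2}. Then k²·S_k → 2/(B√A) as k → +∞. -/

import Mathlib

open Filter Topology

section Aux

open Set MeasureTheory

lemma aux_deriv {A c : ℝ} (hA : 0 < A) (hc : 0 < c) (x : ℝ) :
    HasDerivAt (fun x : ℝ => x * (A * x ^ 2 + c) ^ (-(1:ℝ)/2) / c)
      ((A * x ^ 2 + c) ^ (-(3:ℝ)/2)) x := by
  have hu : 0 < A * x ^ 2 + c := by positivity
  have h1 : HasDerivAt (fun x : ℝ => A * x ^ 2 + c) (A * (2 * x ^ 1)) x :=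
    ((hasDerivAt_pow 2 x).const_mul A).add_const c
  have h2 := h1.rpow_const (p := -(1:ℝ)/2) (Or.inl hu.ne')
  have h3 := ((hasDerivAt_id x).mul h2).div_const c
  convert h3 using 1
  · rfl
  · rfl
  · rfl
  have e1 : -(1:ℝ)/2 - 1 = -(3:ℝ)/2 := by norm_num
  have e2 : (A * x ^ 2 + c) ^ (-(1:ℝ)/2)
      = (A * x ^ 2 + c) * (A * x ^ 2 + c) ^ (-(3:ℝ)/2) := by
    have := (Real.rpow_add hu 1 (-(3:ℝ)/2)).symm
    norm_num at this ⊢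
    rw [← this]
  rw [e1, e2]
  field_simp
  simp only [id]
  ring

lemma aux_tendsto {A c : ℝ} (hA : 0 < A) (hc : 0 < c) :
    Tendsto (fun x : ℝ => x * (A * x ^ 2 + c) ^ (-(1:ℝ)/2) / c) atTop
      (𝓝 (1 / (c * Real.sqrt A))) := by
  have key : Tendsto (fun x : ℝ => (A + c / x ^ 2) ^ (-(1:ℝ)/2) / c) atTop
      (𝓝 (1 / (c * Real.sqrt A))) := by
    have h0 : Tendsto (fun x : ℝ => A + c / x ^ 2) atTop (𝓝 A) := by
      have : Tendsto (fun x : ℝ => c / x ^ 2) atTop (𝓝 0) :=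
        Tendsto.div_atTop tendsto_const_nhds (tendsto_pow_atTop two_ne_zero)
      simpa using tendsto_const_nhds.add this
    have h1 : Tendsto (fun x : ℝ => (A + c / x ^ 2) ^ (-(1:ℝ)/2)) atTop
        (𝓝 (A ^ (-(1:ℝ)/2))) :=
      ((Real.continuousAt_rpow_const A _ (Or.inl hA.ne')).tendsto).comp h0
    have h2 := h1.div_const c
    have : A ^ (-(1:ℝ)/2) / c = 1 / (c * Real.sqrt A) := by
      rw [Real.sqrt_eq_rpow, show -(1:ℝ)/2 = -(1/2 : ℝ) by norm_num,
        Real.rpow_neg hA.le]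
      field_simp
    rwa [this] at h2
  apply key.congr'
  filter_upwards [eventually_gt_atTop (0:ℝ)] with x hx
  have hx2 : (0:ℝ) < x ^ 2 := by positivity
  have e1 : A + c / x ^ 2 = (A * x ^ 2 + c) / x ^ 2 := by field_simp
  have e2 : ((A * x ^ 2 + c) / x ^ 2) ^ (-(1:ℝ)/2)
      = (A * x ^ 2 + c) ^ (-(1:ℝ)/2) / (x ^ 2) ^ (-(1:ℝ)/2) := by
    rw [Real.div_rpow (by positivity) hx2.le]
  have e3 : (x ^ 2 : ℝ) ^ (-(1:ℝ)/2) = x⁻¹ := by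
    rw [← Real.rpow_natCast x 2, ← Real.rpow_mul hx.le]
    norm_num
    exact Real.rpow_neg_one x
  rw [e1, e2, e3]
  field_simp

lemma f_nonneg {A c : ℝ} (hA : 0 < A) (hc : 0 < c) (x : ℝ) :
    0 ≤ (A * x ^ 2 + c) ^ (-(3:ℝ)/2) := by positivity

lemma aux_integral {A c : ℝ} (hA : 0 < A) (hc : 0 < c) :
    ∫ x in Ioi (0:ℝ), (A * x ^ 2 + c) ^ (-(3:ℝ)/2) = 1 / (c * Real.sqrt A) := by
  have := integral_Ioi_of_hasDerivAt_of_nonneg' (a := (0:ℝ)) (fun x _ => aux_deriv hA hc x)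
    (fun x _ => f_nonneg hA hc x) (aux_tendsto hA hc)
  simpa using this

lemma aux_integrable {A c : ℝ} (hA : 0 < A) (hc : 0 < c) :
    IntegrableOn (fun x : ℝ => (A * x ^ 2 + c) ^ (-(3:ℝ)/2)) (Ioi 0) :=
  integrableOn_Ioi_deriv_of_nonneg' (a := (0:ℝ)) (fun x _ => aux_deriv hA hc x)
    (fun x _ => f_nonneg hA hc x) (aux_tendsto hA hc)

lemma aux_anti {A c : ℝ} (hA : 0 < A) (hc : 0 < c) {s : Set ℝ} (hs : s ⊆ Ici 0) :
    AntitoneOn (fun x : ℝ => (A * x ^ 2 + c) ^ (-(3:ℝ)/2)) s := by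
  intro x hx y hy hxy
  have hx0 : (0:ℝ) ≤ x := hs hx
  have h2 : x ^ 2 ≤ y ^ 2 := pow_le_pow_left₀ hx0 hxy 2
  exact Real.rpow_le_rpow_of_nonpos (by positivity) (by nlinarith) (by norm_num)

lemma aux_interval_le {A c : ℝ} (hA : 0 < A) (hc : 0 < c) (N : ℕ) :
    ∫ x in (0:ℝ)..(N:ℝ), (A * x ^ 2 + c) ^ (-(3:ℝ)/2) ≤ 1 / (c * Real.sqrt A) := by
  rw [intervalIntegral.integral_of_le (Nat.cast_nonneg N), ← aux_integral hA hc]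
  apply setIntegral_mono_set (aux_integrable hA hc)
    (Eventually.of_forall fun x => f_nonneg hA hc x)
  exact HasSubset.Subset.eventuallyLE Ioc_subset_Ioi_self

lemma aux_partial_upper {A c : ℝ} (hA : 0 < A) (hc : 0 < c) (N : ℕ) :
    ∑ i ∈ Finset.range N, (A * ((i:ℝ)+1) ^ 2 + c) ^ (-(3:ℝ)/2)
      ≤ 1 / (c * Real.sqrt A) := by
  have h := AntitoneOn.sum_le_integral (x₀ := 0) (a := N)
    (f := fun x : ℝ => (A * x ^ 2 + c) ^ (-(3:ℝ)/2))
    (aux_anti hA hc (fun x hx => hx.1))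
  refine le_trans (le_of_eq ?_) (h.trans (by simpa using aux_interval_le hA hc N))
  apply Finset.sum_congr rfl
  intro i _
  push_cast
  ring_nf

lemma aux_lower {A c : ℝ} (hA : 0 < A) (hc : 0 < c)
    (hs : Summable fun n : ℕ => (A * (n:ℝ) ^ 2 + c) ^ (-(3:ℝ)/2)) :
    1 / (c * Real.sqrt A) ≤ ∑' n : ℕ, (A * (n:ℝ) ^ 2 + c) ^ (-(3:ℝ)/2) := by
  rw [← aux_integral hA hc]
  have ht := intervalIntegral_tendsto_integral_Ioi (0:ℝ) (aux_integrable hA hc)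
    (tendsto_natCast_atTop_atTop (R := ℝ))
  refine le_of_tendsto ht (Eventually.of_forall fun N => ?_)
  have h := AntitoneOn.integral_le_sum (x₀ := 0) (a := N)
    (f := fun x : ℝ => (A * x ^ 2 + c) ^ (-(3:ℝ)/2))
    (aux_anti hA hc (fun x hx => hx.1))
  refine le_trans (by simpa using h) ?_
  exact Summable.sum_le_tsum _ (fun i _ => f_nonneg hA hc _) hs

lemma aux_summable_shift {A c : ℝ} (hA : 0 < A) (hc : 0 < c) :
    Summable fun n : ℕ => (A * ((n:ℝ)+1) ^ 2 + c) ^ (-(3:ℝ)/2) :=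
  summable_of_sum_range_le (fun n => f_nonneg hA hc _) (aux_partial_upper hA hc)

lemma aux_summable {A c : ℝ} (hA : 0 < A) (hc : 0 < c) :
    Summable fun n : ℕ => (A * (n:ℝ) ^ 2 + c) ^ (-(3:ℝ)/2) := by
  rw [← summable_nat_add_iff 1]
  convert aux_summable_shift hA hc using 2 with n
  · rfl
  push_cast
  ring

lemma aux_bounds {A c : ℝ} (hA : 0 < A) (hc : 0 < c) :
    |(∑' n : ℤ, (A * (n:ℝ) ^ 2 + c) ^ (-(3:ℝ)/2)) - 2 * (1 / (c * Real.sqrt A))|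
      ≤ c ^ (-(3:ℝ)/2) := by
  set I := 1 / (c * Real.sqrt A) with hI
  have hs := aux_summable hA hc
  have hss := aux_summable_shift hA hc
  have hss' : Summable fun n : ℕ => (A * ((-((n:ℤ)+1) : ℤ) : ℝ) ^ 2 + c) ^ (-(3:ℝ)/2) := by
    convert hss using 2 with n
    push_cast
    ring
  have hsplit : (∑' n : ℤ, (A * (n:ℝ) ^ 2 + c) ^ (-(3:ℝ)/2))
      = (∑' n : ℕ, (A * (n:ℝ) ^ 2 + c) ^ (-(3:ℝ)/2))
        + ∑' n : ℕ, (A * ((n:ℝ)+1) ^ 2 + c) ^ (-(3:ℝ)/2) := by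
    rw [tsum_of_nat_of_neg_add_one (by exact_mod_cast hs) (by exact_mod_cast hss')]
    congr 1
    apply tsum_congr
    intro n
    push_cast
    ring_nf
  have hzero : (∑' n : ℕ, (A * (n:ℝ) ^ 2 + c) ^ (-(3:ℝ)/2))
      = (A * (0:ℝ) ^ 2 + c) ^ (-(3:ℝ)/2)
        + ∑' n : ℕ, (A * ((n:ℝ)+1) ^ 2 + c) ^ (-(3:ℝ)/2) := by
    rw [Summable.tsum_eq_zero_add hs]
    congr 1
    · norm_num
    · apply tsum_congr
      intro n
      push_cast
      ring_nf
  have h0 : (A * (0:ℝ) ^ 2 + c) ^ (-(3:ℝ)/2) = c ^ (-(3:ℝ)/2) := by norm_num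
  have hub : (∑' n : ℕ, (A * (n:ℝ) ^ 2 + c) ^ (-(3:ℝ)/2)) ≤ c ^ (-(3:ℝ)/2) + I := by
    rw [hzero, h0]
    exact add_le_add_right (Real.tsum_le_of_sum_range_le (fun n => f_nonneg hA hc _)
      (aux_partial_upper hA hc)) _
  have hlb := aux_lower hA hc hs
  rw [hsplit]
  have e : (∑' n : ℕ, (A * ((n:ℝ)+1) ^ 2 + c) ^ (-(3:ℝ)/2))
      = (∑' n : ℕ, (A * (n:ℝ) ^ 2 + c) ^ (-(3:ℝ)/2)) - c ^ (-(3:ℝ)/2) := by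
    rw [hzero, h0]; ring
  rw [e, abs_le]
  constructor <;> nlinarith [f_nonneg hA hc (0:ℝ), hub, hlb]

end Aux

/-- for A, B > 0, with S_k := Σ_{n ∈ ℤ} (An² + Bk²)^{−3/2}, one
has k²·S_k → 2/(B√A) as k → +∞. -/
theorem stmt11 (A B : ℝ) (hA : 0 < A) (hB : 0 < B) :
    Tendsto (fun k : ℤ =>
        (k : ℝ) ^ 2 * ∑' n : ℤ, (A * (n : ℝ) ^ 2 + B * (k : ℝ) ^ 2) ^ (-(3 : ℝ) / 2))
      atTop (𝓝 (2 / (B * Real.sqrt A))) := by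
  have hsA : 0 < Real.sqrt A := Real.sqrt_pos.2 hA
  have key : Tendsto (fun k : ℤ =>
      (k : ℝ) ^ 2 * (∑' n : ℤ, (A * (n : ℝ) ^ 2 + B * (k : ℝ) ^ 2) ^ (-(3 : ℝ) / 2))
        - 2 / (B * Real.sqrt A)) atTop (𝓝 0) := by
    apply squeeze_zero_norm' (a := fun k : ℤ => B ^ (-(3:ℝ)/2) / (k:ℝ))
    · filter_upwards [eventually_ge_atTop (1:ℤ)] with k hk
      have hk0 : (0:ℝ) < (k:ℝ) := by exact_mod_cast hk.trans_lt' zero_lt_one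
      set c := B * (k:ℝ) ^ 2 with hc
      have hcpos : 0 < c := by positivity
      have hb := aux_bounds (c := c) hA hcpos
      set S := ∑' n : ℤ, (A * (n : ℝ) ^ 2 + B * (k : ℝ) ^ 2) ^ (-(3 : ℝ) / 2) with hS
      have e1 : (k:ℝ) ^ 2 * S - 2 / (B * Real.sqrt A)
          = (k:ℝ) ^ 2 * (S - 2 * (1 / (c * Real.sqrt A))) := by
        rw [hc]
        field_simp
      have e3 : ((k:ℝ) ^ 2 : ℝ) ^ (-(3:ℝ)/2) = ((k:ℝ) ^ 3)⁻¹ := by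
        rw [← Real.rpow_natCast (k:ℝ) 2, ← Real.rpow_mul hk0.le,
          ← Real.rpow_natCast (k:ℝ) 3, ← Real.rpow_neg hk0.le]
        norm_num
      have e2 : c ^ (-(3:ℝ)/2) = B ^ (-(3:ℝ)/2) * ((k:ℝ) ^ 3)⁻¹ := by
        rw [hc, Real.mul_rpow hB.le (sq_nonneg _), e3]
      rw [Real.norm_eq_abs, e1, abs_mul, abs_of_nonneg (sq_nonneg ((k:ℝ)))]
      calc (k:ℝ) ^ 2 * |S - 2 * (1 / (c * Real.sqrt A))|
          ≤ (k:ℝ) ^ 2 * c ^ (-(3:ℝ)/2) := by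
            exact mul_le_mul_of_nonneg_left hb (sq_nonneg _)
        _ = B ^ (-(3:ℝ)/2) / (k:ℝ) := by
            rw [e2]
            field_simp
    · exact Tendsto.div_atTop tendsto_const_nhds tendsto_intCast_atTop_atTop
  have := key.add_const (2 / (B * Real.sqrt A))
  simpa using this
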